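/- For every w ∈ 𝔽 with |w| > 1, the bounded weighted backward shift A_w on the space c of convergent sequences, (A_w x)_k = w·x_{k+1}, is not hypercyclic: no x ∈ c has dense orbit {A_wⁿ x : n ≥ 0} in c. -/

import Mathlib

open Filter Topology BoundedContinuousFunction

/-- The space `c` of convergent sequences, as a submodule of the bounded sequences
`ℕ →ᵇ 𝕜` with the sup-norm. -/
def convSeq (𝕜 : Type*) [RCLike 𝕜] : Submodule 𝕜 (ℕ →ᵇ 𝕜) where
  carrier := {x | ∃ L : 𝕜, Tendsto ⇑x atTop (nhds L)}
  add_mem' := by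
    rintro x y ⟨Lx, hx⟩ ⟨Ly, hy⟩
    exact ⟨Lx + Ly, (hx.add hy).congr (fun n => by simp)⟩
  zero_mem' := ⟨0, (tendsto_const_nhds : Tendsto (fun _ : ℕ => (0 : 𝕜)) atTop (nhds 0)).congr (fun n => by simp)⟩
  smul_mem' := by
    rintro c x ⟨L, hx⟩
    exact ⟨c • L, by simpa using hx.const_smul c⟩

/-- For every `w` with `‖w‖ > 1`, the bounded weighted backward shift `A_w`
on the space `c` of convergent sequences, `(A_w x) k = w * x (k+1)`, is not hypercyclic:
no `x ∈ c` has dense orbit `{A_wⁿ x : n ≥ 0}` in `c`. -/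
theorem bounded_backward_shift_on_c_not_hypercyclic
    (𝕜 : Type*) [RCLike 𝕜] (w : 𝕜) (hw : 1 < ‖w‖)
    (A : convSeq 𝕜 →L[𝕜] convSeq 𝕜)
    (hA : ∀ (x : convSeq 𝕜) (k : ℕ), (A x : ℕ →ᵇ 𝕜) k = w * (x : ℕ →ᵇ 𝕜) (k + 1)) :
    ¬ ∃ x : convSeq 𝕜, Dense (Set.range fun n : ℕ => (A ^ n) x) := by
  rintro ⟨x, hD⟩
  obtain ⟨L, hL⟩ := x.2
  -- the n-th orbit element converges to `w ^ n * L`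
  have limA : ∀ n : ℕ,
      Tendsto (⇑((((A ^ n) x : convSeq 𝕜) : ℕ →ᵇ 𝕜))) atTop (𝓝 (w ^ n * L)) := by
    intro n
    induction n with
    | zero => simpa using hL
    | succ n ih =>
      have h1 : (A ^ (n + 1)) x = A ((A ^ n) x) := by rw [pow_succ']; rfl
      have h2 : Tendsto (fun k => ((((A ^ n) x : convSeq 𝕜) : ℕ →ᵇ 𝕜)) (k + 1))
          atTop (𝓝 (w ^ n * L)) := ih.comp (tendsto_add_atTop_nat 1)
      have h3 := h2.const_mul w
      rw [h1]
      have h4 : (fun k => w * ((((A ^ n) x : convSeq 𝕜) : ℕ →ᵇ 𝕜)) (k + 1))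
          = ⇑(((A ((A ^ n) x) : convSeq 𝕜) : ℕ →ᵇ 𝕜)) := by
        funext k; exact (hA _ k).symm
      rw [h4] at h3
      have : w * (w ^ n * L) = w ^ (n + 1) * L := by ring
      rwa [this] at h3
  -- the limit of an orbit element is close to the limit of a nearby constant sequence
  have key : ∀ (n : ℕ) (M : 𝕜), ‖w ^ n * L - M‖ ≤
      dist ((A ^ n) x)
        (⟨BoundedContinuousFunction.const ℕ M, ⟨M, tendsto_const_nhds⟩⟩ : convSeq 𝕜) := by
    intro n M
    have h : Tendsto (fun k => ‖((((A ^ n) x : convSeq 𝕜) : ℕ →ᵇ 𝕜)) k - M‖)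
        atTop (𝓝 ‖w ^ n * L - M‖) := ((limA n).sub tendsto_const_nhds).norm
    refine le_of_tendsto h (Filter.Eventually.of_forall fun k => ?_)
    have hd := BoundedContinuousFunction.dist_coe_le_dist
      (f := (((A ^ n) x : convSeq 𝕜) : ℕ →ᵇ 𝕜))
      (g := BoundedContinuousFunction.const ℕ M) k
    rw [Subtype.dist_eq]
    simpa [dist_eq_norm] using hd
  rcases eq_or_ne L 0 with hL0 | hL0
  · -- limits are all 0; the constant sequence 1 is never approached within 1/2
    obtain ⟨y, ⟨n, rfl⟩, hdist⟩ := hD.exists_dist_lt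
      (⟨BoundedContinuousFunction.const ℕ (1 : 𝕜), ⟨1, tendsto_const_nhds⟩⟩ : convSeq 𝕜)
      (ε := 1/2) (by norm_num)
    have := key n 1
    rw [dist_comm] at hdist
    have h1 : ‖w ^ n * L - 1‖ = 1 := by rw [hL0]; simp
    linarith [h1 ▸ this]
  · -- limits have norm ≥ ‖L‖; the constant sequence L/2 is never approached within ‖L‖/4
    have hLpos : 0 < ‖L‖ := norm_pos_iff.mpr hL0
    obtain ⟨y, ⟨n, rfl⟩, hdist⟩ := hD.exists_dist_lt
      (⟨BoundedContinuousFunction.const ℕ (L / 2), ⟨L / 2, tendsto_const_nhds⟩⟩ : convSeq 𝕜)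
      (ε := ‖L‖ / 4) (by linarith)
    have hk := key n (L / 2)
    rw [dist_comm] at hdist
    have h1 : ‖L‖ ≤ ‖w ^ n * L‖ := by
      rw [norm_mul, norm_pow]
      nlinarith [one_le_pow₀ (le_of_lt hw) (n := n), norm_nonneg L]
    have h2 : ‖w ^ n * L‖ - ‖L / 2‖ ≤ ‖w ^ n * L - L / 2‖ := norm_sub_norm_le _ _
    have h3 : ‖L / 2‖ = ‖L‖ / 2 := by rw [norm_div]; norm_num
    linarith
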